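/- arXiv:2404.03672 — 2 statements merged into one kernel-verified Lean document; each statement's English description precedes it below -/
import Mathlib

section
/- The second derivative of x ↦ -ln F(x) at any x > 0 equals F'(x)((x/2)F(x) + F'(x)) / F(x)², which is strictly positive. -/
noncomputable def F (ξ : ℝ) : ℝ :=
  (1 / Real.sqrt Real.pi) * ∫ s in (0:ℝ)..ξ, Real.exp (-s ^ 2 / 4)

noncomputable def F' (x : ℝ) : ℝ := (1 / Real.sqrt Real.pi) * Real.exp (-x ^ 2 / 4)

lemma cont_exp : Continuous fun s : ℝ => Real.exp (-s ^ 2 / 4) := by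
  continuity

lemma hasDerivF (t : ℝ) : HasDerivAt F (F' t) t := by
  have h := intervalIntegral.integral_hasDerivAt_right
    (cont_exp.intervalIntegrable 0 t)
    (cont_exp.stronglyMeasurableAtFilter _ _) cont_exp.continuousAt
  exact h.const_mul (1 / Real.sqrt Real.pi)

lemma c_pos : 0 < 1 / Real.sqrt Real.pi := by
  have := Real.sqrt_pos.mpr Real.pi_pos
  positivity

lemma F'_pos (t : ℝ) : 0 < F' t := by
  unfold F'
  have := Real.sqrt_pos.mpr Real.pi_pos
  positivity

lemma F_pos {t : ℝ} (ht : 0 < t) : 0 < F t := by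
  unfold F
  have h : 0 < ∫ s in (0:ℝ)..t, Real.exp (-s ^ 2 / 4) := by
    apply intervalIntegral.intervalIntegral_pos_of_pos_on
      (cont_exp.intervalIntegrable 0 t)
    · intro s _; exact Real.exp_pos _
    · exact ht
  have := Real.sqrt_pos.mpr Real.pi_pos
  positivity

lemma hasDerivF' (t : ℝ) : HasDerivAt F' (-(t / 2) * F' t) t := by
  have h1 : HasDerivAt (fun x : ℝ => -x ^ 2 / 4) (-(t / 2)) t := by
    have := ((hasDerivAt_pow 2 t).neg).div_const 4
    exact this.congr_deriv (by norm_num; ring)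
  have h2 := (h1.exp).const_mul (1 / Real.sqrt Real.pi)
  refine h2.congr_deriv ?_
  unfold F'; ring

theorem second_deriv_neg_log_F (x : ℝ) (hx : 0 < x) :
    deriv (deriv (fun t => -Real.log (F t))) x
      = F' x * (x / 2 * F x + F' x) / (F x) ^ 2 ∧
    0 < F' x * (x / 2 * F x + F' x) / (F x) ^ 2 := by
  have hF := F_pos hx
  constructor
  · have hev : ∀ᶠ t in nhds x, deriv (fun t => -Real.log (F t)) t = -(F' t / F t) := by
      filter_upwards [eventually_gt_nhds hx] with t ht
      exact (((hasDerivF t).log (F_pos ht).ne').neg).deriv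
    rw [Filter.EventuallyEq.deriv_eq hev]
    have h : HasDerivAt (fun t => -(F' t / F t))
        (-((-(x / 2) * F' x * F x - F' x * F' x) / F x ^ 2)) x :=
      ((hasDerivF' x).div (hasDerivF x) hF.ne').neg
    rw [h.deriv]
    field_simp
    ring
  · apply div_pos
    · exact mul_pos (F'_pos x) (add_pos (mul_pos (by linarith) hF) (F'_pos x))
    · positivity
end

section
/- For each c > 0, the sub-level set Ω_c = {ξ̄ ∈ Ω : E(ξ̄) ≤ c} of the Stefan-Dirichlet potential E is compact; in particular E attains its minimum on Ω. -/
/-- Extension of `ξ = (ξ₁, …, ξₘ)` to indices `0, …, m+1`, with the convention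
`ξ_{m+1} = 0` (the value at index `0` is irrelevant: there `F(ξ₀/a₀) = F(+∞) = 1`). -/
def ext (m : ℕ) (ξ : Fin m → ℝ) : ℕ → ℝ :=
  fun i => if h : 1 ≤ i ∧ i ≤ m then ξ ⟨i - 1, by omega⟩ else 0

/-- The Stefan–Dirichlet potential
`E(ξ̄) = -∑_{i=0}^m kᵢ(u_{i+1}-uᵢ) ln(F(ξᵢ/aᵢ) - F(ξ_{i+1}/aᵢ)) + ∑_{i=1}^m dᵢξᵢ²/4`,
with conventions `F(ξ₀/a₀) = 1`, `ξ_{m+1} = 0` (so `F(ξ_{m+1}/aₘ) = 0`). -/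
noncomputable def E (m : ℕ) (u k a d : ℕ → ℝ) (ξ : Fin m → ℝ) : ℝ :=
  (∑ i ∈ Finset.range (m + 1),
    -(k i * (u (i + 1) - u i) *
      Real.log ((if i = 0 then 1 else F (ext m ξ i / a i)) - F (ext m ξ (i + 1) / a i))))
  + ∑ i ∈ Finset.Icc 1 m, d i * (ext m ξ i) ^ 2 / 4

/-- The domain `Ω = {ξ₁ > ξ₂ > ⋯ > ξₘ > 0}`. -/
def Omega (m : ℕ) : Set (Fin m → ℝ) := {ξ | StrictAnti ξ ∧ ∀ i, 0 < ξ i}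

/-! ### Auxiliary lemmas about `F` -/

section Faux
open MeasureTheory Filter Real Set

lemma EC_gcont : Continuous (fun s : ℝ => Real.exp (-s ^ 2 / 4)) := by continuity

lemma EC_gii (x y : ℝ) : IntervalIntegrable (fun s : ℝ => Real.exp (-s ^ 2 / 4)) volume x y :=
  EC_gcont.intervalIntegrable x y

lemma EC_geq : (fun s : ℝ => Real.exp (-s ^ 2 / 4)) = fun s : ℝ => Real.exp (-(1/4) * s ^ 2) := by
  funext s; ring_nf

lemma EC_gintT (T : ℝ) : IntegrableOn (fun s : ℝ => Real.exp (-s ^ 2 / 4)) (Ioi T) volume := by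
  rw [EC_geq]
  exact (integrable_exp_neg_mul_sq (by norm_num)).integrableOn

lemma EC_gIoi : ∫ s in Ioi (0:ℝ), Real.exp (-s ^ 2 / 4) = Real.sqrt Real.pi := by
  rw [EC_geq, integral_gaussian_Ioi]
  rw [show Real.pi / (1/4) = 4 * Real.pi by ring]
  rw [show (4:ℝ) * Real.pi = 2^2 * Real.pi by norm_num]
  rw [Real.sqrt_mul (by positivity), Real.sqrt_sq (by norm_num)]
  ring

lemma EC_sqrtpi_pos : 0 < Real.sqrt Real.pi := Real.sqrt_pos.2 Real.pi_pos

lemma F_cont : Continuous F :=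
  continuous_const.mul (intervalIntegral.continuous_primitive EC_gii 0)

lemma F_strictMono : StrictMono F := by
  intro x y hxy
  have h : F y - F x = (1 / Real.sqrt Real.pi) * ∫ s in x..y, Real.exp (-s ^ 2 / 4) := by
    rw [F, F, ← mul_sub, ← intervalIntegral.integral_interval_sub_left (EC_gii 0 y) (EC_gii 0 x)]
  have hpos : 0 < ∫ s in x..y, Real.exp (-s ^ 2 / 4) :=
    intervalIntegral.intervalIntegral_pos_of_pos (EC_gii x y) (fun s => Real.exp_pos _) hxy
  nlinarith [EC_sqrtpi_pos, mul_pos (div_pos one_pos EC_sqrtpi_pos) hpos]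

lemma F_zero : F 0 = 0 := by simp [F]

lemma F_lt_one (x : ℝ) : F x < 1 := by
  have h1 : F x ≤ F (max x 1) := F_strictMono.monotone (le_max_left _ _)
  set T := max x 1 with hT
  have hTpos : (0:ℝ) < T := lt_of_lt_of_le one_pos (le_max_right _ _)
  have htail : 0 < ∫ s in Ioi T, Real.exp (-s ^ 2 / 4) := by
    have hle : ∫ s in Ioc T (T+1), Real.exp (-s ^ 2 / 4) ≤ ∫ s in Ioi T, Real.exp (-s ^ 2 / 4) := by
      apply MeasureTheory.setIntegral_mono_set (EC_gintT T)
      · exact Filter.Eventually.of_forall (fun s => (Real.exp_pos _).le)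
      · exact Filter.Eventually.of_forall (fun s hs => hs.1)
    have : 0 < ∫ s in Ioc T (T+1), Real.exp (-s ^ 2 / 4) := by
      rw [← intervalIntegral.integral_of_le (by linarith)]
      exact intervalIntegral.intervalIntegral_pos_of_pos (EC_gii T (T+1))
        (fun s => Real.exp_pos _) (by linarith)
    linarith
  have hsplit : ∫ s in Ioi (0:ℝ), Real.exp (-s ^ 2 / 4)
      = (∫ s in Ioc 0 T, Real.exp (-s ^ 2 / 4)) + ∫ s in Ioi T, Real.exp (-s ^ 2 / 4) := by
    rw [← MeasureTheory.setIntegral_union (Set.Ioc_disjoint_Ioi le_rfl) measurableSet_Ioi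
      ((EC_gintT 0).mono_set Set.Ioc_subset_Ioi_self) (EC_gintT T), Set.Ioc_union_Ioi_eq_Ioi hTpos.le]
  have h2 : F T < 1 := by
    rw [F, intervalIntegral.integral_of_le hTpos.le]
    rw [div_mul_eq_mul_div, one_mul, div_lt_one EC_sqrtpi_pos, ← EC_gIoi, hsplit]
    linarith
  linarith

lemma F_tendsto : Tendsto F atTop (nhds 1) := by
  have h := MeasureTheory.intervalIntegral_tendsto_integral_Ioi
    (f := fun s : ℝ => Real.exp (-s ^ 2 / 4)) (b := fun x : ℝ => x) 0 (EC_gintT 0) tendsto_id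
  have h2 := h.const_mul (1 / Real.sqrt Real.pi)
  rw [EC_gIoi, one_div, inv_mul_cancel₀ (ne_of_gt EC_sqrtpi_pos)] at h2
  unfold F
  simpa [one_div] using h2

lemma F_nonneg {x : ℝ} (hx : 0 ≤ x) : 0 ≤ F x := by
  rcases eq_or_lt_of_le hx with h | h
  · simp [← h, F_zero]
  · exact le_of_lt (F_zero ▸ F_strictMono h)

end Faux

open Filter

/-! ### Auxiliary lemmas about `ext` and the terms of `E` -/

/-- The `i`-th logarithmic term of `E`. -/
noncomputable def Tt (m : ℕ) (u k a : ℕ → ℝ) (ξ : Fin m → ℝ) (i : ℕ) : ℝ :=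
  -(k i * (u (i + 1) - u i) *
      Real.log ((if i = 0 then 1 else F (ext m ξ i / a i)) - F (ext m ξ (i + 1) / a i)))

lemma E_eq (m : ℕ) (u k a d : ℕ → ℝ) (ξ : Fin m → ℝ) :
    E m u k a d ξ = (∑ i ∈ Finset.range (m + 1), Tt m u k a ξ i)
      + ∑ i ∈ Finset.Icc 1 m, d i * (ext m ξ i) ^ 2 / 4 := rfl

lemma ext_nonneg {m : ℕ} {ξ : Fin m → ℝ} (hξ : ξ ∈ Omega m) (i : ℕ) : 0 ≤ ext m ξ i := by
  unfold ext
  split_ifs with h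
  · exact (hξ.2 _).le
  · exact le_rfl

lemma ext_eq {m : ℕ} (ξ : Fin m → ℝ) {i : ℕ} (h1 : 1 ≤ i) (h2 : i ≤ m) :
    ext m ξ i = ξ ⟨i - 1, by omega⟩ := dif_pos ⟨h1, h2⟩

lemma ext_top {m : ℕ} (ξ : Fin m → ℝ) : ext m ξ (m + 1) = 0 := dif_neg (by omega)

lemma ext_lt {m : ℕ} {ξ : Fin m → ℝ} (hξ : ξ ∈ Omega m) {i : ℕ} (h1 : 1 ≤ i) (h2 : i ≤ m) :
    ext m ξ (i + 1) < ext m ξ i := by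
  rcases eq_or_lt_of_le h2 with h | h
  · subst h
    rw [ext_top, ext_eq ξ h1 le_rfl]
    exact hξ.2 _
  · rw [ext_eq ξ h1 h2, ext_eq ξ (by omega) (by omega)]
    exact hξ.1 (show (⟨i - 1, by omega⟩ : Fin m) < ⟨i + 1 - 1, by omega⟩ by
      simp [Fin.lt_def]; omega)

lemma ext_cont (m : ℕ) (i : ℕ) : Continuous (fun ξ : Fin m → ℝ => ext m ξ i) := by
  unfold ext
  by_cases h : 1 ≤ i ∧ i ≤ m
  · simp only [dif_pos h]
    exact continuous_apply _
  · simp only [dif_neg h]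
    exact continuous_const

lemma diff_pos {m : ℕ} (hm : 1 ≤ m) {a : ℕ → ℝ} {ξ : Fin m → ℝ} (hξ : ξ ∈ Omega m)
    {i : ℕ} (him : i ≤ m) (hai : 0 < a i) :
    0 < (if i = 0 then 1 else F (ext m ξ i / a i)) - F (ext m ξ (i + 1) / a i) := by
  by_cases h0 : i = 0
  · subst h0
    rw [if_pos rfl, sub_pos]
    exact F_lt_one _
  · rw [if_neg h0, sub_pos]
    exact F_strictMono (by
      rw [div_lt_div_iff_of_pos_right hai]
      exact ext_lt hξ (by omega) him)

lemma diff_le_one {m : ℕ} {a : ℕ → ℝ} {ξ : Fin m → ℝ} (hξ : ξ ∈ Omega m)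
    {i : ℕ} (hai : 0 < a i) :
    (if i = 0 then 1 else F (ext m ξ i / a i)) - F (ext m ξ (i + 1) / a i) ≤ 1 := by
  have h1 : (if i = 0 then 1 else F (ext m ξ i / a i)) ≤ 1 := by
    split_ifs
    · exact le_rfl
    · exact (F_lt_one _).le
  have h2 : 0 ≤ F (ext m ξ (i + 1) / a i) :=
    F_nonneg (div_nonneg (ext_nonneg hξ _) hai.le)
  linarith

/-- Strict antitonicity from adjacent strict decreases. -/
lemma strictAnti_of_adjacent {m : ℕ} (x : Fin m → ℝ)
    (h : ∀ i : ℕ, ∀ hi : i + 1 < m, x ⟨i + 1, hi⟩ < x ⟨i, by omega⟩) : StrictAnti x := by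
  have key : ∀ n : ℕ, ∀ hn : n < m, ∀ p : Fin m, p.val < n → x ⟨n, hn⟩ < x p := by
    intro n
    induction n with
    | zero => intro hn p hp; omega
    | succ n ih =>
      intro hn p hp
      rcases eq_or_lt_of_le (Nat.lt_succ_iff.mp hp) with h' | h'
      · have : p = ⟨n, by omega⟩ := by
          apply Fin.ext; simp [h']
        rw [this]
        exact h n hn
      · exact lt_trans (h n hn) (ih (by omega) p h')
  intro p q hpq
  have := key q.val q.isLt p hpq
  simpa using this

theorem E_coercive (m : ℕ) (hm : 1 ≤ m) (u k a d : ℕ → ℝ)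
    (hk : ∀ i ≤ m, 0 < k i) (ha : ∀ i ≤ m, 0 < a i)
    (hd : ∀ i, 1 ≤ i → i ≤ m → 0 ≤ d i)
    (hu0 : u 0 ≤ u 1) (hu : ∀ i, 1 ≤ i → i ≤ m → u i < u (i + 1))
    (hd1 : u 0 = u 1 → 0 < d 1) :
    (∀ c : ℝ, 0 < c → IsCompact {ξ | ξ ∈ Omega m ∧ E m u k a d ξ ≤ c}) ∧
    ∃ ξ₀ ∈ Omega m, ∀ ξ ∈ Omega m, E m u k a d ξ₀ ≤ E m u k a d ξ := by
  -- nonnegativity of the coefficients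
  have hK0 : ∀ i ≤ m, 0 ≤ k i * (u (i + 1) - u i) := by
    intro i him
    rcases Nat.eq_zero_or_pos i with h0 | h0
    · subst h0; exact mul_nonneg (hk 0 (by omega)).le (by linarith)
    · exact (mul_pos (hk i him) (by linarith [hu i h0 him])).le
  have hKpos : ∀ i, 1 ≤ i → i ≤ m → 0 < k i * (u (i + 1) - u i) := fun i h1 h2 =>
    mul_pos (hk i h2) (by linarith [hu i h1 h2])
  -- nonnegativity of the terms
  have hTnn : ∀ ξ ∈ Omega m, ∀ i ∈ Finset.range (m + 1), 0 ≤ Tt m u k a ξ i := by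
    intro ξ hξ i hi
    rw [Finset.mem_range] at hi
    have him : i ≤ m := by omega
    have hlog : Real.log ((if i = 0 then 1 else F (ext m ξ i / a i))
        - F (ext m ξ (i + 1) / a i)) ≤ 0 :=
      Real.log_nonpos (diff_pos hm hξ him (ha i him)).le (diff_le_one hξ (ha i him))
    unfold Tt
    rw [neg_nonneg]
    exact mul_nonpos_of_nonneg_of_nonpos (hK0 i him) hlog
  have hDnn : ∀ ξ ∈ Omega m, ∀ i ∈ Finset.Icc 1 m, 0 ≤ d i * (ext m ξ i) ^ 2 / 4 := by
    intro ξ hξ i hi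
    rw [Finset.mem_Icc] at hi
    have := hd i hi.1 hi.2
    positivity
  -- single term bounds
  have hET : ∀ ξ ∈ Omega m, ∀ i ∈ Finset.range (m + 1), Tt m u k a ξ i ≤ E m u k a d ξ := by
    intro ξ hξ i hi
    rw [E_eq]
    have h1 := Finset.single_le_sum (hTnn ξ hξ) hi
    have h2 := Finset.sum_nonneg (hDnn ξ hξ)
    linarith
  have hED : ∀ ξ ∈ Omega m, d 1 * (ext m ξ 1) ^ 2 / 4 ≤ E m u k a d ξ := by
    intro ξ hξ
    rw [E_eq]
    have h1 := Finset.single_le_sum (hDnn ξ hξ) (Finset.mem_Icc.2 ⟨le_refl 1, hm⟩)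
    have h2 := Finset.sum_nonneg (hTnn ξ hξ)
    linarith
  have hEnn : ∀ ξ ∈ Omega m, 0 ≤ E m u k a d ξ := by
    intro ξ hξ
    rw [E_eq]
    have h1 := Finset.sum_nonneg (hTnn ξ hξ)
    have h2 := Finset.sum_nonneg (hDnn ξ hξ)
    linarith
  -- continuity of E at points of Omega
  have hEcont : ∀ x ∈ Omega m, ContinuousAt (E m u k a d) x := by
    intro x hx
    have : ContinuousAt (fun ξ => (∑ i ∈ Finset.range (m + 1), Tt m u k a ξ i)
        + ∑ i ∈ Finset.Icc 1 m, d i * (ext m ξ i) ^ 2 / 4) x := by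
      apply ContinuousAt.add
      · apply tendsto_finset_sum
        intro i hi
        rw [Finset.mem_range] at hi
        have him : i ≤ m := by omega
        have hg : Continuous (fun ξ : Fin m → ℝ =>
            (if i = 0 then 1 else F (ext m ξ i / a i)) - F (ext m ξ (i + 1) / a i)) := by
          apply Continuous.sub
          · split_ifs
            · exact continuous_const
            · exact F_cont.comp ((ext_cont m i).div_const _)
          · exact F_cont.comp ((ext_cont m (i + 1)).div_const _)
        have hne : (if i = 0 then 1 else F (ext m x i / a i)) - F (ext m x (i + 1) / a i) ≠ 0 :=
          (diff_pos hm hx him (ha i him)).ne'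
        exact ((hg.continuousAt.log hne).const_mul (k i * (u (i + 1) - u i))).neg
      · apply tendsto_finset_sum
        intro i _
        exact ((continuous_const.mul ((ext_cont m i).pow 2)).div_const 4).continuousAt
    exact this
  -- bound on the first coordinate for elements of a sublevel set
  have hbound : ∀ c : ℝ, ∃ B : ℝ, ∀ ξ : Fin m → ℝ, ξ ∈ Omega m → E m u k a d ξ ≤ c →
      ∀ j : Fin m, |ξ j| ≤ B := by
    intro c
    have hfirst : ∀ ξ : Fin m → ℝ, ξ ∈ Omega m → ∀ j : Fin m, ξ j ≤ ext m ξ 1 := by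
      intro ξ hξ j
      rw [ext_eq ξ le_rfl hm]
      exact hξ.1.antitone (show (⟨0, by omega⟩ : Fin m) ≤ j by simp [Fin.le_def])
    rcases eq_or_lt_of_le hu0 with hcase | hcase
    · -- u 0 = u 1 : use the d₁ term
      have hd1' := hd1 hcase
      refine ⟨Real.sqrt (4 * c / d 1), fun ξ hξ hEc j => ?_⟩
      have h1 : d 1 * (ext m ξ 1) ^ 2 / 4 ≤ c := le_trans (hED ξ hξ) hEc
      have h2 : (ext m ξ 1) ^ 2 ≤ 4 * c / d 1 := by
        rw [le_div_iff₀ hd1']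
        nlinarith
      have h3 : ext m ξ 1 ≤ Real.sqrt (4 * c / d 1) :=
        (Real.le_sqrt (ext_nonneg hξ 1) (le_trans (sq_nonneg _) h2)).2 h2
      rw [abs_of_pos (hξ.2 j)]
      exact le_trans (hfirst ξ hξ j) h3
    · -- u 0 < u 1 : use the 0-th log term
      set K0 := k 0 * (u 1 - u 0) with hK0def
      have hK0pos : 0 < K0 := mul_pos (hk 0 (by omega)) (by linarith)
      set ε := Real.exp (-c / K0) with hεdef
      have hεpos : 0 < ε := Real.exp_pos _
      obtain ⟨R, hR⟩ := Filter.eventually_atTop.mp (F_tendsto.eventually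
        (eventually_gt_nhds (show 1 - ε < 1 by linarith)))
      refine ⟨a 0 * max R 0, fun ξ hξ hEc j => ?_⟩
      have hT0 : Tt m u k a ξ 0 ≤ c :=
        le_trans (hET ξ hξ 0 (Finset.mem_range.2 (by omega))) hEc
      have hdpos := diff_pos hm hξ (show (0:ℕ) ≤ m by omega) (ha 0 (by omega))
      rw [if_pos rfl] at hdpos
      have hlog : -c / K0 ≤ Real.log (1 - F (ext m ξ (0 + 1) / a 0)) := by
        unfold Tt at hT0
        rw [if_pos rfl, ← hK0def] at hT0
        rw [div_le_iff₀ hK0pos]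
        nlinarith [hT0]
      have hge : ε ≤ 1 - F (ext m ξ (0 + 1) / a 0) := by
        calc ε = Real.exp (-c / K0) := rfl
        _ ≤ Real.exp (Real.log (1 - F (ext m ξ (0 + 1) / a 0))) := Real.exp_le_exp.2 hlog
        _ = 1 - F (ext m ξ (0 + 1) / a 0) := Real.exp_log hdpos
      have hFle : F (ext m ξ 1 / a 0) ≤ 1 - ε := by linarith [hge]
      have hlt : ext m ξ 1 / a 0 < R := by
        by_contra hcon
        push_neg at hcon
        linarith [hR _ hcon]
      have ha0 := ha 0 (by omega)
      have : ext m ξ 1 ≤ a 0 * max R 0 := by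
        rcases le_or_gt R 0 with h | h
        · exact absurd (lt_of_lt_of_le hlt h)
            (not_lt.2 (div_nonneg (ext_nonneg hξ 1) ha0.le))
        · have h2 : ext m ξ 1 < a 0 * R := by
            rw [div_lt_iff₀ ha0] at hlt
            linarith
          have : a 0 * R ≤ a 0 * max R 0 := by
            apply mul_le_mul_of_nonneg_left (le_max_left _ _) ha0.le
          linarith
      rw [abs_of_pos (hξ.2 j)]
      exact le_trans (hfirst ξ hξ j) this
  -- compactness of sublevel sets (for every c)
  have hcompact : ∀ c : ℝ, IsCompact {ξ | ξ ∈ Omega m ∧ E m u k a d ξ ≤ c} := by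
    intro c
    rw [Metric.isCompact_iff_isClosed_bounded]
    constructor
    · -- closedness via sequences
      apply IsSeqClosed.isClosed
      intro ξn x hmemn hlim
      have hco : ∀ j : Fin m, Tendsto (fun n => ξn n j) atTop (nhds (x j)) :=
        tendsto_pi_nhds.1 hlim
      have hext : ∀ i : ℕ, Tendsto (fun n => ext m (ξn n) i) atTop (nhds (ext m x i)) := by
        intro i
        by_cases h : 1 ≤ i ∧ i ≤ m
        · simp only [ext, dif_pos h]
          exact hco _
        · simp only [ext, dif_neg h]
          exact tendsto_const_nhds
      have hxanti : ∀ p q : Fin m, p ≤ q → x q ≤ x p := by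
        intro p q hpq
        exact le_of_tendsto_of_tendsto' (hco q) (hco p)
          (fun n => (hmemn n).1.1.antitone hpq)
      have hxnn : ∀ j : Fin m, 0 ≤ x j := fun j =>
        ge_of_tendsto (hco j) (Filter.Eventually.of_forall fun n => ((hmemn n).1.2 j).le)
      by_cases hx : x ∈ Omega m
      · refine ⟨hx, ?_⟩
        have hEc : Tendsto (fun n => E m u k a d (ξn n)) atTop (nhds (E m u k a d x)) :=
          ((hEcont x hx).tendsto).comp hlim
        exact le_of_tendsto hEc (Filter.Eventually.of_forall fun n => (hmemn n).2)
      · exfalso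
        -- there must be a "bad" index where the extended vector degenerates
        have hbad : ∃ i : ℕ, 1 ≤ i ∧ i ≤ m ∧ ext m x (i + 1) = ext m x i := by
          by_contra hno
          push_neg at hno
          apply hx
          have hextle : ∀ i : ℕ, 1 ≤ i → i ≤ m → ext m x (i + 1) < ext m x i := by
            intro i h1 h2
            have hle : ext m x (i + 1) ≤ ext m x i := by
              rcases eq_or_lt_of_le h2 with h | h
              · subst h
                rw [ext_top, ext_eq x h1 le_rfl]
                exact hxnn _
              · rw [ext_eq x h1 h2, ext_eq x (by omega) (by omega)]
                exact hxanti _ _ (by simp only [Fin.le_def]; omega)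
            exact lt_of_le_of_ne hle (hno i h1 h2)
          have hlast : 0 < x ⟨m - 1, by omega⟩ := by
            have := hextle m (by omega) le_rfl
            rwa [ext_top, ext_eq x (by omega) le_rfl] at this
          constructor
          · apply strictAnti_of_adjacent
            intro i hi
            have := hextle (i + 1) (by omega) (by omega)
            rwa [ext_eq x (by omega) (by omega), ext_eq x (by omega) (by omega)] at this
          · intro j
            calc (0:ℝ) < x ⟨m - 1, by omega⟩ := hlast
            _ ≤ x j := hxanti _ _ (by simp [Fin.le_def]; omega)
        obtain ⟨i, hi1, hi2, hieq⟩ := hbad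
        have hKipos := hKpos i hi1 hi2
        set fn : ℕ → ℝ := fun n =>
          F (ext m (ξn n) i / a i) - F (ext m (ξn n) (i + 1) / a i) with hfndef
        have hfnpos : ∀ n, 0 < fn n := by
          intro n
          have := diff_pos hm (hmemn n).1 hi2 (ha i hi2)
          rwa [if_neg (by omega)] at this
        have hfnlim : Tendsto fn atTop (nhds 0) := by
          have h1 : Tendsto fn atTop
              (nhds (F (ext m x i / a i) - F (ext m x (i + 1) / a i))) := by
            apply Filter.Tendsto.sub
            · exact (F_cont.tendsto _).comp ((hext i).div_const _)
            · exact (F_cont.tendsto _).comp ((hext (i + 1)).div_const _)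
          rwa [hieq, sub_self] at h1
        have hloglim : Tendsto (fun n => Real.log (fn n)) atTop atBot :=
          Real.tendsto_log_nhdsGT_zero.comp
            (tendsto_nhdsWithin_of_tendsto_nhds_of_eventually_within fn hfnlim
              (Filter.Eventually.of_forall hfnpos))
        have hTlim : Tendsto (fun n => Tt m u k a (ξn n) i) atTop atTop := by
          have heq : (fun n => Tt m u k a (ξn n) i)
              = fun n => (k i * (u (i + 1) - u i)) * (-(Real.log (fn n))) := by
            funext n
            unfold Tt
            rw [if_neg (by omega)]
            ring
          rw [heq]
          exact (tendsto_neg_atTop_iff.mpr hloglim).const_mul_atTop hKipos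
        obtain ⟨n, hn⟩ := (hTlim.eventually_gt_atTop c).exists
        have : Tt m u k a (ξn n) i ≤ c :=
          le_trans (hET (ξn n) (hmemn n).1 i (Finset.mem_range.2 (by omega))) (hmemn n).2
        linarith
    · -- boundedness
      obtain ⟨B, hB⟩ := hbound c
      apply Bornology.IsBounded.subset (Metric.isBounded_closedBall (x := (0 : Fin m → ℝ))
        (r := max B 0))
      intro ξ hξ
      rw [Metric.mem_closedBall, dist_zero_right]
      rw [pi_norm_le_iff_of_nonneg (le_max_right _ _)]
      intro j
      rw [Real.norm_eq_abs]
      exact le_trans (hB ξ hξ.1 hξ.2 j) (le_max_left _ _)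
  constructor
  · exact fun c _ => hcompact c
  · -- existence of a minimizer
    set ξs : Fin m → ℝ := fun j => (m : ℝ) - j.val with hξsdef
    have hξs : ξs ∈ Omega m := by
      constructor
      · intro p q hpq
        simp only [hξsdef]
        have : (p.val : ℝ) < q.val := by exact_mod_cast hpq
        linarith
      · intro j
        simp only [hξsdef]
        have : (j.val : ℝ) < m := by exact_mod_cast j.isLt
        linarith
    set c := max 1 (E m u k a d ξs) with hcdef
    set S := {ξ | ξ ∈ Omega m ∧ E m u k a d ξ ≤ c} with hSdef
    have hSne : S.Nonempty := ⟨ξs, hξs, le_max_right _ _⟩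
    have hScont : ContinuousOn (E m u k a d) S := fun x hx =>
      (hEcont x hx.1).continuousWithinAt
    obtain ⟨ξ₀, hξ₀S, hmin⟩ := (hcompact c).exists_isMinOn hSne hScont
    refine ⟨ξ₀, hξ₀S.1, fun ξ hξ => ?_⟩
    by_cases hc : E m u k a d ξ ≤ c
    · exact hmin ⟨hξ, hc⟩
    · push_neg at hc
      calc E m u k a d ξ₀ ≤ E m u k a d ξs := hmin ⟨hξs, le_max_right _ _⟩
      _ ≤ c := le_max_right _ _
      _ ≤ E m u k a d ξ := hc.le
end
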